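/- If two smooth functions H, H' on a symplectic 2n-manifold generate the same Hamiltonian vector field (so H - H' is locally constant), and N is a closed oriented null-homologous codimension-2 submanifold, then n∫_N H ω^{n-1} = n∫_N H' ω^{n-1}. -/
import Mathlib


/- Abstract model of forms on a closed symplectic 2n-manifold (M,ω).  H and H'
are smooth functions generating the same Hamiltonian vector field, i.e.
dH = dH' (H - H' locally constant).  N is a closed oriented null-homologous
codimension-2 submanifold, encoded by its integration current `intN`, which is
the boundary of a current `intS` (intN = intS ∘ d).  Claim:
n∫_N H ω^{n-1} = n∫_N H' ω^{n-1}, i.e. lk(X_H, N) is independent of the choice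
of generating Hamiltonian. -/
theorem linking_number_independent_of_hamiltonian
    (n : ℕ) (hn : 1 ≤ n)
    (A : Type) [Ring A] [Algebra ℝ A]
    (Gr : ℕ → Submodule ℝ A)
    (d : A →ₗ[ℝ] A)
    (hd2 : ∀ x : A, d (d x) = 0)
    (hdmem : ∀ (j : ℕ) (x : A), x ∈ Gr j → d x ∈ Gr (j + 1))
    (hmul : ∀ (i j : ℕ) (x y : A), x ∈ Gr i → y ∈ Gr j → x * y ∈ Gr (i + j))
    (hleib : ∀ (i : ℕ) (x y : A), x ∈ Gr i →
      d (x * y) = d x * y + ((-1 : ℝ) ^ i) • (x * d y))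
    (ω H H' : A)
    (hω : ω ∈ Gr 2) (hωclosed : d ω = 0)
    (hH : H ∈ Gr 0) (hH' : H' ∈ Gr 0)
    (hsame : d H = d H')                           -- same Hamiltonian vector field
    (intN intS : A →ₗ[ℝ] ℝ)
    (hnullhom : ∀ x : A, intN x = intS (d x)) :    -- N null-homologous over ℝ
    intN ((n : ℝ) • (H * ω ^ (n - 1))) = intN ((n : ℝ) • (H' * ω ^ (n - 1))) := by
  have key : ∀ (K : A), K ∈ Gr 0 → d K = 0 → ∀ k : ℕ, d (K * ω ^ k) = 0 := by
    intro K hK hdK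
    have hmem : ∀ k : ℕ, K * ω ^ k ∈ Gr (2 * k) := by
      intro k
      induction k with
      | zero => simpa using hK
      | succ m ihm =>
        have := hmul (2 * m) 2 (K * ω ^ m) ω ihm hω
        rw [pow_succ, ← mul_assoc, show 2 * (m + 1) = 2 * m + 2 by ring]
        exact this
    intro k
    induction k with
    | zero => simpa using hdK
    | succ k ih =>
      rw [pow_succ, ← mul_assoc, hleib (2 * k) _ _ (hmem k), ih, zero_mul,
        hωclosed, mul_zero, smul_zero, add_zero]
  have h1 : intN ((H - H') * ω ^ (n - 1)) = 0 := by
    rw [hnullhom]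
    rw [key (H - H') (sub_mem hH hH') (by rw [map_sub, hsame, sub_self]) (n - 1),
      map_zero]
  rw [sub_mul, map_sub, sub_eq_zero] at h1
  rw [map_smul, map_smul, h1]
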